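/- Let p be a prime and let d be a positive integer dividing p − 1 with d < p − 1. Let Z_d = {z ∈ 𝔽_p : z^d = 1}. If A ⊆ 𝔽_p is a finite set such that A − A ⊆ Z_d ∪ {0}, then |A| · (|A| − 1) ≤ d. -/

import Mathlib

open Pointwise Polynomial Finset

/-- Lagrange-type moment lemma: for a finite set `A` in a field and any polynomial `g` of
degree at most `|A| - 1`, the weighted sum of values of `g` with weights
`(∏_{b ≠ a} (a - b))⁻¹` equals the coefficient of `X^(|A|-1)` in `g`. -/
lemma hp_interp {K : Type*} [Field K] [DecidableEq K] (A : Finset K) (hA : A.Nonempty)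
    (g : Polynomial K) (hg : g.natDegree ≤ A.card - 1) :
    ∑ a ∈ A, (∏ b ∈ A.erase a, (a - b))⁻¹ * g.eval a = g.coeff (A.card - 1) := by
  set n := A.card - 1 with hn
  set G : Polynomial K :=
    ∑ a ∈ A, C ((∏ b ∈ A.erase a, (a - b))⁻¹ * g.eval a) * ∏ b ∈ A.erase a, (X - C b) with hG
  have hcard : ∀ a ∈ A, (A.erase a).card = n := fun a ha => by
    rw [Finset.card_erase_of_mem ha]
  have hprodne : ∀ a ∈ A, (∏ b ∈ A.erase a, (a - b)) ≠ 0 := by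
    intro a ha
    refine Finset.prod_ne_zero_iff.mpr fun b hb => ?_
    exact sub_ne_zero_of_ne (Finset.ne_of_mem_erase hb).symm
  have hGeval : ∀ x ∈ A, G.eval x = g.eval x := by
    intro x hx
    rw [hG, eval_finset_sum]
    rw [Finset.sum_eq_single x]
    · rw [eval_mul, eval_C, eval_prod]
      simp only [eval_sub, eval_X, eval_C]
      rw [mul_assoc, mul_comm (g.eval x), ← mul_assoc, inv_mul_cancel₀ (hprodne x hx), one_mul]
    · intro a ha hax
      rw [eval_mul, eval_prod]
      have hxe : x ∈ A.erase a := Finset.mem_erase.mpr ⟨fun h => hax h.symm, hx⟩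
      have hz : ∏ b ∈ A.erase a, eval x (X - C b) = 0 :=
        Finset.prod_eq_zero hxe (by simp)
      rw [hz, mul_zero]
    · intro h; exact absurd hx h
  have hGdeg : G.natDegree ≤ n := by
    refine natDegree_sum_le_of_forall_le _ _ fun a ha => ?_
    refine (natDegree_mul_le).trans ?_
    rw [natDegree_C, zero_add]
    refine le_trans (natDegree_prod_le _ _) ?_
    calc ∑ b ∈ A.erase a, (X - C b).natDegree ≤ ∑ _b ∈ A.erase a, 1 := by
          exact Finset.sum_le_sum fun b _ => le_of_eq (natDegree_X_sub_C b)
      _ = (A.erase a).card := by simp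
      _ = n := hcard a ha
  have hzero : g - G = 0 := by
    refine Polynomial.eq_zero_of_natDegree_lt_card_of_eval_eq_zero' (g - G) A ?_ ?_
    · intro x hx
      rw [eval_sub, hGeval x hx, sub_self]
    · have : (g - G).natDegree ≤ n := le_trans (natDegree_sub_le _ _) (max_le hg hGdeg)
      have hA1 : 1 ≤ A.card := Finset.card_pos.mpr hA
      omega
  have hgG : g = G := sub_eq_zero.mp hzero
  conv_rhs => rw [hgG]
  rw [hG, finset_sum_coeff]
  refine Finset.sum_congr rfl fun a ha => ?_
  rw [coeff_C_mul]
  have hmonic : (∏ b ∈ A.erase a, (X - C b)).Monic :=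
    monic_prod_of_monic _ _ fun b _ => monic_X_sub_C b
  have hdeg : (∏ b ∈ A.erase a, (X - C b)).natDegree = n := by
    rw [natDegree_prod_of_monic _ _ fun b _ => monic_X_sub_C b]
    calc ∑ b ∈ A.erase a, (X - C b).natDegree = ∑ _b ∈ A.erase a, 1 :=
        Finset.sum_congr rfl fun b _ => natDegree_X_sub_C b
      _ = n := by rw [Finset.sum_const, smul_eq_mul, mul_one]; exact hcard a ha
  rw [← hdeg, hmonic.coeff_natDegree, mul_one]


theorem diffset_in_roots_of_unity_bound
    (p : ℕ) (hp : p.Prime) (d : ℕ) (hd : 0 < d)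
    (hdvd : d ∣ p - 1) (hlt : d < p - 1)
    (A : Finset (ZMod p))
    (h : (↑(A - A) : Set (ZMod p)) ⊆ {z : ZMod p | z ^ d = 1} ∪ {0}) :
    A.card * (A.card - 1) ≤ d := by
  haveI : Fact p.Prime := ⟨hp⟩
  rcases Nat.lt_or_ge A.card 2 with hk | hk
  · have h1 : A.card - 1 = 0 := by omega
    rw [h1, Nat.mul_zero]
    exact Nat.zero_le d
  -- main case
  set n := A.card - 1 with hn
  have hn1 : 1 ≤ n := by omega
  have hA : A.Nonempty := Finset.card_pos.mp (by omega)
  -- all nonzero differences are d-th roots of unity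
  have key : ∀ a ∈ A, ∀ b ∈ A, a ≠ b → (a - b) ^ d = 1 := by
    intro a ha b hb hab
    have hmem : a - b ∈ (A - A : Finset (ZMod p)) := Finset.sub_mem_sub ha hb
    rcases h (Finset.mem_coe.mpr hmem) with h1 | h0
    · exact h1
    · exact absurd (Set.mem_singleton_iff.mp h0) (sub_ne_zero_of_ne hab)
  -- n ≤ d
  have hnd : n ≤ d := by
    obtain ⟨a₀, ha₀⟩ := hA
    have himg : (A.erase a₀).image (· - a₀) ⊆ (nthRoots d (1 : ZMod p)).toFinset := by
      intro z hz
      obtain ⟨x, hx, rfl⟩ := Finset.mem_image.mp hz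
      rw [Multiset.mem_toFinset, mem_nthRoots hd]
      exact key x (Finset.mem_of_mem_erase hx) a₀ ha₀ (Finset.ne_of_mem_erase hx)
    calc n = (A.erase a₀).card := by rw [Finset.card_erase_of_mem ha₀]
      _ = ((A.erase a₀).image (· - a₀)).card :=
          (Finset.card_image_of_injective _ (sub_left_injective)).symm
      _ ≤ (nthRoots d (1 : ZMod p)).toFinset.card := Finset.card_le_card himg
      _ ≤ Multiset.card (nthRoots d (1 : ZMod p)) := Multiset.toFinset_card_le _
      _ ≤ d := card_nthRoots d 1
  -- d + n ≤ p - 1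
  set D := d + n with hD
  have h2d : D ≤ p - 1 := by
    obtain ⟨m, hm⟩ := hdvd
    have hm2 : 2 ≤ m := by
      rcases m with _ | _ | m
      · omega
      · omega
      · omega
    calc D ≤ d + d := by omega
      _ = d * 2 := by ring
      _ ≤ d * m := Nat.mul_le_mul_left d hm2
      _ = p - 1 := hm.symm
  have hp2 : 2 ≤ p := hp.two_le
  -- the binomial coefficient is nonzero mod p
  have hbinom : ((D.choose n : ZMod p)) ≠ 0 := by
    rw [Ne, ZMod.natCast_eq_zero_iff]
    intro hdvd'
    have hch : D.choose n ∣ D.factorial :=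
      ⟨d.factorial * n.factorial, by
        rw [← Nat.add_choose_mul_factorial_mul_factorial d n]; ring⟩
    have h1 : p ∣ D.factorial := hdvd'.trans hch
    have h2 : p ≤ D := (Nat.Prime.dvd_factorial hp).mp h1
    omega
  -- weights
  set c : ZMod p → ZMod p := fun a => (∏ b ∈ A.erase a, (a - b))⁻¹ with hc
  -- moments
  have hmom : ∀ e : ℕ, e ≤ n → ∑ a ∈ A, c a * a ^ e = if e = n then 1 else 0 := by
    intro e he
    have h1 := hp_interp A hA (X ^ e) (by rw [natDegree_X_pow]; omega)
    rw [coeff_X_pow] at h1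
    simp only [eval_pow, eval_X] at h1
    rw [show A.card - 1 = n from hn.symm] at h1
    rw [hc]
    rw [h1]
    by_cases hen : e = n
    · rw [if_pos hen, if_pos hen.symm]
    · rw [if_neg hen, if_neg (fun hcon => hen hcon.symm)]
  set P : Polynomial (ZMod p) := ∑ a ∈ A, C (c a) * (X - C a) ^ D with hP
  have hPcoeff : ∀ i : ℕ, P.coeff i = (D.choose i : ZMod p) * ∑ a ∈ A, c a * (-a) ^ (D - i) := by
    intro i
    rw [hP, finset_sum_coeff, Finset.mul_sum]
    refine Finset.sum_congr rfl fun a ha => ?_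
    rw [coeff_C_mul, sub_eq_add_neg, ← C_neg, coeff_X_add_C_pow]
    ring
  set γ : ZMod p := (-1) ^ n with hγ
  set Q : Polynomial (ZMod p) := P - C γ with hQdef
  -- coefficients above d vanish
  have hQcoeff_high : ∀ i, d < i → Q.coeff i = 0 := by
    intro i hi
    rw [hQdef, coeff_sub, coeff_C, if_neg (by omega : ¬ i = 0), sub_zero, hPcoeff i]
    rcases Nat.lt_or_ge D i with hDi | hiD
    · rw [Nat.choose_eq_zero_of_lt hDi]
      simp
    · have hzero : ∑ a ∈ A, c a * (-a) ^ (D - i) = 0 := by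
        have h2 : ∑ a ∈ A, c a * a ^ (D - i) = 0 := by
          rw [hmom (D - i) (by omega), if_neg (by omega)]
        calc ∑ a ∈ A, c a * (-a) ^ (D - i)
            = ∑ a ∈ A, (-1) ^ (D - i) * (c a * a ^ (D - i)) := by
              refine Finset.sum_congr rfl fun a ha => ?_
              rw [neg_pow]; ring
          _ = (-1) ^ (D - i) * ∑ a ∈ A, c a * a ^ (D - i) := by rw [← Finset.mul_sum]
          _ = 0 := by rw [h2, mul_zero]
      rw [hzero, mul_zero]
  have hQdeg : Q.natDegree ≤ d := natDegree_le_iff_coeff_eq_zero.mpr fun N hN => hQcoeff_high N hN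
  -- coefficient d of Q is nonzero
  have hQd : Q.coeff d ≠ 0 := by
    rw [hQdef, coeff_sub, coeff_C, if_neg (by omega : ¬ d = 0), sub_zero, hPcoeff d,
      show D - d = n by omega]
    have hsum : ∑ a ∈ A, c a * (-a) ^ n = (-1 : ZMod p) ^ n := by
      calc ∑ a ∈ A, c a * (-a) ^ n = (-1 : ZMod p) ^ n * ∑ a ∈ A, c a * a ^ n := by
            rw [Finset.mul_sum]
            refine Finset.sum_congr rfl fun a ha => ?_
            rw [neg_pow]; ring
        _ = (-1) ^ n := by rw [hmom n le_rfl, if_pos rfl, mul_one]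
    rw [hsum]
    have hsym : D.choose d = D.choose n := by
      have h3 := Nat.choose_symm (show n ≤ D by omega)
      rw [show D - n = d by omega] at h3
      exact h3
    rw [hsym]
    intro hcon
    rcases mul_eq_zero.mp hcon with h1 | h2
    · exact hbinom h1
    · exact (pow_ne_zero n (neg_ne_zero.mpr (one_ne_zero : (1 : ZMod p) ≠ 0))) h2
  have hQne : Q ≠ 0 := fun h0 => hQd (by rw [h0, coeff_zero])
  -- multiplicity ≥ n at each point of A
  have hmult : ∀ b ∈ A, (X - C b) ^ n ∣ Q := by
    intro b hb
    have hXdvd : (X : Polynomial (ZMod p)) ^ n ∣ Q.comp (X + C b) := by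
      rw [X_pow_dvd_iff]
      intro t ht
      have hcompeq : Q.comp (X + C b) =
          (∑ a ∈ A, C (c a) * (X + C (b - a)) ^ D) - C γ := by
        rw [hQdef, sub_comp, C_comp, hP, Polynomial.sum_comp]
        congr 1
        refine Finset.sum_congr rfl fun a ha => ?_
        rw [mul_comp, C_comp, pow_comp, sub_comp, X_comp, C_comp]
        rw [C_sub]
        ring
      rw [hcompeq, coeff_sub, finset_sum_coeff]
      have hterm : ∀ a ∈ A, (C (c a) * (X + C (b - a)) ^ D).coeff t
          = (D.choose t : ZMod p) * (c a * (b - a) ^ (n - t)) := by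
        intro a ha
        rw [coeff_C_mul, coeff_X_add_C_pow]
        by_cases hab : a = b
        · subst hab
          rw [sub_self, zero_pow (by omega : D - t ≠ 0), zero_pow (by omega : n - t ≠ 0)]
          ring
        · have h1 : (b - a) ^ d = 1 := key b hb a ha (fun hcon => hab hcon.symm)
          rw [show D - t = d + (n - t) by omega, pow_add, h1, one_mul]
          ring
      rw [Finset.sum_congr rfl hterm, ← Finset.mul_sum]
      have hgdeg : ((C b - X : Polynomial (ZMod p)) ^ (n - t)).natDegree ≤ n - t := by
        refine le_trans (natDegree_pow_le) ?_
        have : (C b - X : Polynomial (ZMod p)).natDegree = 1 := by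
          rw [show (C b - X : Polynomial (ZMod p)) = -(X - C b) by ring, natDegree_neg,
            natDegree_X_sub_C]
        rw [this, mul_one]
      have hsum2 : ∑ a ∈ A, c a * (b - a) ^ (n - t) = if t = 0 then γ else 0 := by
        have h3 := hp_interp A hA ((C b - X) ^ (n - t))
          (le_trans hgdeg (by omega))
        simp only [eval_pow, eval_sub, eval_C, eval_X] at h3
        rw [show A.card - 1 = n from hn.symm] at h3
        rw [hc, h3]
        by_cases ht0 : t = 0
        · rw [if_pos ht0]
          subst ht0
          rw [Nat.sub_zero,
            show (C b - X : Polynomial (ZMod p)) = -(X - C b) by ring, neg_pow]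
          have hmon : ((X - C b : Polynomial (ZMod p)) ^ n).coeff n = 1 := by
            have h5 := ((monic_X_sub_C b).pow n).coeff_natDegree
            rwa [natDegree_pow, natDegree_X_sub_C, mul_one] at h5
          rw [show ((-1 : Polynomial (ZMod p)) ^ n) = C ((-1 : ZMod p) ^ n) by
              rw [map_pow, map_neg, map_one], coeff_C_mul, hmon, mul_one, hγ]
        · rw [if_neg ht0]
          refine coeff_eq_zero_of_natDegree_lt (lt_of_le_of_lt hgdeg ?_)
          omega
      rw [hsum2, coeff_C]
      by_cases ht0 : t = 0
      · subst ht0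
        simp
      · simp [ht0]
    have hQeq : Q = (Q.comp (X + C b)).comp (X - C b) := by
      rw [comp_assoc, add_comp, X_comp, C_comp, sub_add_cancel, comp_X]
    obtain ⟨S, hS⟩ := hXdvd
    refine ⟨S.comp (X - C b), ?_⟩
    rw [hQeq, hS, mul_comp, pow_comp, X_comp]
  -- product of coprime factors divides Q
  have hpairs : (A : Set (ZMod p)).Pairwise (Function.onFun IsCoprime fun b => ((X : Polynomial (ZMod p)) - C b) ^ n) := by
    intro x hx y hy hxy
    exact (Polynomial.isCoprime_X_sub_C_of_isUnit_sub ((sub_ne_zero_of_ne hxy).isUnit)).pow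
  have hproddvd : (∏ b ∈ A, ((X : Polynomial (ZMod p)) - C b) ^ n) ∣ Q :=
    Finset.prod_dvd_of_coprime hpairs fun b hb => hmult b hb
  have hdeg2 : (∏ b ∈ A, ((X : Polynomial (ZMod p)) - C b) ^ n).natDegree = A.card * n := by
    rw [natDegree_prod_of_monic _ _ fun b _ => (monic_X_sub_C b).pow n]
    rw [Finset.sum_congr rfl (fun b _ => by rw [natDegree_pow, natDegree_X_sub_C, mul_one])]
    rw [Finset.sum_const, smul_eq_mul]
  have hfinal := Polynomial.natDegree_le_of_dvd hproddvd hQne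
  rw [hdeg2] at hfinal
  calc A.card * (A.card - 1) = A.card * n := by rw [hn]
    _ ≤ Q.natDegree := hfinal
    _ ≤ d := hQdeg
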